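/- For every integer k ≥ 1, the Frobenius type-A seaweed g = p^A(k|1 / k+1) has the log-concave spectrum property: listing the distinct values of its spectrum in increasing order, the corresponding sequence of multiplicities m_0,…,m_N satisfies m_i^2 ≥ m_{i−1} m_{i+1} for all 0 < i < N. -/

import Mathlib

namespace Seaweed

/-- Positions `i` and `j` (1-indexed) are joined by an arc of the composition `c`:
they lie in the same block of `c` and are placed symmetrically within it. -/
def blockPair (c : List ℕ) (i j : ℕ) : Prop :=
  ∃ k, k < c.length ∧ (c.take k).sum < i ∧ (c.take k).sum < j ∧
    i + j = 2 * (c.take k).sum + c.getD k 0 + 1 ∧ i ≠ j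

lemma blockPair_symm {c : List ℕ} {i j : ℕ} (h : blockPair c i j) : blockPair c j i := by
  obtain ⟨k, hk, hi, hj, hsum, hne⟩ := h
  exact ⟨k, hk, hj, hi, by omega, hne.symm⟩

/-- The meander `M(a|b)` of the pair of compositions `(a, b)`, as a simple graph on `ℕ`
(positions `1, …, a.sum` carry the meander; all other naturals are isolated).
Top edges come from `a`, bottom edges from `b`. -/
def meander (a b : List ℕ) : SimpleGraph ℕ where
  Adj i j := blockPair a i j ∨ blockPair b i j
  symm := ⟨fun _ _ h => h.imp blockPair_symm blockPair_symm⟩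
  loopless := ⟨by
    rintro i (⟨k, _, _, _, _, hne⟩ | ⟨k, _, _, _, _, hne⟩) <;> exact hne rfl⟩

/-- The directed-edge relation of the oriented meander: top edges are oriented
right-to-left, bottom edges left-to-right. -/
def dirEdge (a b : List ℕ) (x y : ℕ) : Prop :=
  (blockPair a x y ∧ y < x) ∨ (blockPair b x y ∧ x < y)

open scoped Classical in
/-- The weight of a walk in the oriented meander: each step taken in agreement with
the orientation counts `+1`, each step against it counts `-1`. -/
noncomputable def walkWeight (a b : List ℕ) {i j : ℕ} (w : (meander a b).Walk i j) : ℤ :=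
  (w.darts.map fun d => if dirEdge a b d.toProd.1 d.toProd.2 then (1 : ℤ) else -1).sum

open scoped Classical in
/-- `w(P_{i,j}(a|b))`: the weight of the (unique, when the meander consists of a single
path) path from `v_i` to `v_j` in the oriented meander. -/
noncomputable def pathWeight (a b : List ℕ) (i j : ℕ) : ℤ :=
  if h : ∃ p : (meander a b).Walk i j, p.IsPath then walkWeight a b h.choose else 0

/-- The meander of `(a, b)` consists of a single path: it has no cycles (in particular no
doubled top/bottom edge, which would be a 2-cycle) and all positions `1, …, n` are
connected.  This is exactly the condition for `p^A(a|b)` to be Frobenius. -/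
def IsSinglePath (a b : List ℕ) : Prop :=
  (meander a b).IsAcyclic ∧
  (∀ i j, i ∈ Finset.Icc 1 a.sum → j ∈ Finset.Icc 1 a.sum → (meander a b).Reachable i j) ∧
  ∀ i j, ¬(blockPair a i j ∧ blockPair b i j)

/-- `i` and `j` lie in the same block of the composition `c`. -/
def sameBlock (c : List ℕ) (i j : ℕ) : Prop :=
  ∃ k, k < c.length ∧ (c.take k).sum < i ∧ i ≤ (c.take k).sum + c.getD k 0 ∧
    (c.take k).sum < j ∧ j ≤ (c.take k).sum + c.getD k 0

/-- The matrix position `(i, j)` belongs to the seaweed `p^A(a|b)`. -/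
def seaweedPos (a b : List ℕ) (i j : ℕ) : Prop :=
  (j ≤ i ∧ sameBlock a i j) ∨ (i ≤ j ∧ sameBlock b i j)

open scoped Classical in
/-- The block of the spectrum matrix of `p^A(a|b)` on rows `R` and columns `C`:
the multiset of weights `w(P_{i,j})` over positions `(i,j)` of the seaweed with
`i ∈ R`, `j ∈ C`. -/
noncomputable def spectrumBlock (a b : List ℕ) (R C : Finset ℕ) : Multiset ℤ :=
  ((R ×ˢ C).filter fun p => seaweedPos a b p.1 p.2).val.map fun p => pathWeight a b p.1 p.2

/-- The multiset of all values of the extended spectrum matrix of `p^A(a|b)`: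
the weights `w(P_{i,j})` over all pairs `1 ≤ i, j ≤ n`. -/
noncomputable def extendedValues (a b : List ℕ) : Multiset ℤ :=
  (Finset.Icc 1 a.sum ×ˢ Finset.Icc 1 a.sum).val.map fun p => pathWeight a b p.1 p.2

/-- The spectrum of a Frobenius type-A seaweed `p^A(a|b)`: the multiset of entries of
its spectrum matrix, with one copy of `0` removed. -/
noncomputable def spectrum (a b : List ℕ) : Multiset ℤ :=
  spectrumBlock a b (Finset.Icc 1 a.sum) (Finset.Icc 1 a.sum) - {0}

/-- The extended spectrum: all entries of the extended spectrum matrix, with one copy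
of `0` removed. -/
noncomputable def extendedSpectrum (a b : List ℕ) : Multiset ℤ :=
  extendedValues a b - {0}

/-- Listing the distinct values of the multiset `S` in increasing order, the
corresponding sequence of multiplicities is log-concave. -/
def HasLogConcaveSpectrum (S : Multiset ℤ) : Prop :=
  ∀ i : ℕ, 0 < i → i + 1 < (S.toFinset.sort (· ≤ ·)).length →
    S.count ((S.toFinset.sort (· ≤ ·)).getD (i - 1) 0) *
      S.count ((S.toFinset.sort (· ≤ ·)).getD (i + 1) 0) ≤
      S.count ((S.toFinset.sort (· ≤ ·)).getD i 0) ^ 2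



lemma blockPairA_iff (k i j : ℕ) :
    blockPair [k, 1] i j ↔ 1 ≤ i ∧ 1 ≤ j ∧ i + j = k + 1 ∧ i ≠ j := by
  constructor
  · rintro ⟨m, hm, h1, h2, h3, h4⟩
    simp only [List.length_cons, List.length_nil] at hm
    interval_cases m <;> simp_all <;> omega
  · rintro ⟨h1, h2, h3, h4⟩
    exact ⟨0, by simp, by simpa, by simpa, by simpa using by omega, h4⟩

lemma blockPairB_iff (k i j : ℕ) :
    blockPair [k + 1] i j ↔ 1 ≤ i ∧ 1 ≤ j ∧ i + j = k + 2 ∧ i ≠ j := by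
  constructor
  · rintro ⟨m, hm, h1, h2, h3, h4⟩
    simp only [List.length_cons, List.length_nil] at hm
    interval_cases m <;> simp_all <;> omega
  · rintro ⟨h1, h2, h3, h4⟩
    exact ⟨0, by simp, by simpa, by simpa, by simpa using by omega, h4⟩

lemma adj_iff (k i j : ℕ) :
    (meander [k, 1] [k + 1]).Adj i j ↔
      1 ≤ i ∧ 1 ≤ j ∧ i ≠ j ∧ (i + j = k + 1 ∨ i + j = k + 2) := by
  show blockPair _ i j ∨ blockPair _ i j ↔ _
  rw [blockPairA_iff, blockPairB_iff]
  tauto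

/-- position of vertex `v` along the meander path -/
def posN (k v : ℕ) : ℕ := if 2 * v ≤ k + 1 then 2 * v - 1 else 2 * (k + 1 - v)

/-- `-position`, a potential function for the oriented meander -/
def phi (k v : ℕ) : ℤ := -(posN k v : ℤ)

open scoped Classical in
lemma step_weight (k : ℕ) {x y : ℕ} (h : (meander [k, 1] [k + 1]).Adj x y) :
    (if dirEdge [k, 1] [k + 1] x y then (1 : ℤ) else -1) = phi k y - phi k x := by
  have hc := (adj_iff k x y).1 h
  obtain ⟨hx, hy, hne, hsum⟩ := hc
  have hd : dirEdge [k, 1] [k + 1] x y ↔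
      (x + y = k + 1 ∧ y < x) ∨ (x + y = k + 2 ∧ x < y) := by
    unfold dirEdge
    rw [blockPairA_iff, blockPairB_iff]
    constructor
    · rintro (⟨⟨_, _, h3, _⟩, h5⟩ | ⟨⟨_, _, h3, _⟩, h5⟩)
      · exact Or.inl ⟨h3, h5⟩
      · exact Or.inr ⟨h3, h5⟩
    · rintro (⟨h3, h5⟩ | ⟨h3, h5⟩)
      · exact Or.inl ⟨⟨hx, hy, h3, hne⟩, h5⟩
      · exact Or.inr ⟨⟨hx, hy, h3, hne⟩, h5⟩
  rw [hd]
  unfold phi posN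
  split_ifs with h1 h2 h3 h2 h3 h3 h3 <;> push_cast <;> omega

lemma walkWeight_eq (k : ℕ) {i j : ℕ} (w : (meander [k, 1] [k + 1]).Walk i j) :
    walkWeight [k, 1] [k + 1] w = phi k j - phi k i := by
  induction w with
  | nil => simp [walkWeight]
  | cons h p ih =>
    unfold walkWeight at ih ⊢
    rw [SimpleGraph.Walk.darts_cons, List.map_cons, List.sum_cons, ih, step_weight k h]
    ring

lemma reach_aux (k : ℕ) : ∀ p : ℕ, ∀ v : ℕ, 1 ≤ v → v ≤ k + 1 → posN k v = p →
    (meander [k, 1] [k + 1]).Reachable (k + 1) v := by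
  intro p
  induction p using Nat.strong_induction_on with
  | _ p ih =>
    intro v hv1 hv2 hpos
    by_cases h0 : v = k + 1
    · subst h0; exact SimpleGraph.Reachable.refl _
    by_cases hsml : 2 * v ≤ k + 1
    · set u := k + 2 - v with hu
      have hadj : (meander [k, 1] [k + 1]).Adj u v := (adj_iff k u v).2 (by omega)
      have hpu : posN k u = 2 * v - 2 := by unfold posN; split_ifs <;> omega
      have hlt : 2 * v - 2 < p := by unfold posN at hpos; split_ifs at hpos <;> omega
      exact (ih _ hlt u (by omega) (by omega) hpu).trans hadj.reachable
    · set u := k + 1 - v with hu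
      have hadj : (meander [k, 1] [k + 1]).Adj u v := (adj_iff k u v).2 (by omega)
      have hpu : posN k u = 2 * (k + 1 - v) - 1 := by unfold posN; split_ifs <;> omega
      have hlt : 2 * (k + 1 - v) - 1 < p := by
        unfold posN at hpos; split_ifs at hpos <;> omega
      exact (ih _ hlt u (by omega) (by omega) hpu).trans hadj.reachable

lemma pathWeight_eq (k : ℕ) {i j : ℕ} (hi1 : 1 ≤ i) (hi2 : i ≤ k + 1)
    (hj1 : 1 ≤ j) (hj2 : j ≤ k + 1) :
    pathWeight [k, 1] [k + 1] i j = phi k j - phi k i := by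
  have hri := reach_aux k _ i hi1 hi2 rfl
  have hrj := reach_aux k _ j hj1 hj2 rfl
  obtain ⟨w⟩ := hri.symm.trans hrj
  have hex : ∃ p : (meander [k, 1] [k + 1]).Walk i j, p.IsPath := ⟨w.toPath.1, w.toPath.2⟩
  rw [pathWeight, dif_pos hex]
  exact walkWeight_eq k _

def sig (k p : ℕ) : ℕ := if p % 2 = 1 then (p + 1) / 2 else k + 1 - p / 2

lemma sig_posN (k v : ℕ) (h1 : 1 ≤ v) (h2 : v ≤ k + 1) : sig k (posN k v) = v := by
  unfold sig posN; split_ifs <;> omega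

lemma posN_sig (k p : ℕ) (hp : p ≤ k) : posN k (sig k p) = p := by
  unfold sig posN; split_ifs <;> omega

lemma posN_le (k v : ℕ) (h1 : 1 ≤ v) (h2 : v ≤ k + 1) : posN k v ≤ k := by
  unfold posN; split_ifs <;> omega

lemma posN_eq_zero (k v : ℕ) (h1 : 1 ≤ v) (h2 : v ≤ k + 1) :
    posN k v = 0 ↔ v = k + 1 := by
  unfold posN; split_ifs <;> omega

lemma sig_bounds (k p : ℕ) (hp : p ≤ k) : 1 ≤ sig k p ∧ sig k p ≤ k + 1 := by
  unfold sig; split_ifs <;> omega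

lemma sig_le_k (k p : ℕ) (hp : p ≤ k) (hp0 : p ≠ 0) : sig k p ≤ k := by
  unfold sig; split_ifs <;> omega

lemma sameBlockA_iff (k i j : ℕ) :
    sameBlock [k, 1] i j ↔ (1 ≤ i ∧ i ≤ k ∧ 1 ≤ j ∧ j ≤ k) ∨ (i = k + 1 ∧ j = k + 1) := by
  constructor
  · rintro ⟨m, hm, h1, h2, h3, h4⟩
    simp only [List.length_cons, List.length_nil] at hm
    interval_cases m <;> simp_all <;> omega
  · rintro (⟨h1, h2, h3, h4⟩ | ⟨h1, h2⟩)
    · exact ⟨0, by simp, by simpa, by simpa using by omega, by simpa, by simpa using by omega⟩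
    · exact ⟨1, by simp, by simpa using by omega, by simpa using by omega,
        by simpa using by omega, by simpa using by omega⟩

lemma sameBlockB_iff (k i j : ℕ) :
    sameBlock [k + 1] i j ↔ 1 ≤ i ∧ i ≤ k + 1 ∧ 1 ≤ j ∧ j ≤ k + 1 := by
  constructor
  · rintro ⟨m, hm, h1, h2, h3, h4⟩
    simp only [List.length_cons, List.length_nil] at hm
    interval_cases m <;> simp_all <;> omega
  · rintro ⟨h1, h2, h3, h4⟩
    exact ⟨0, by simp, by simpa, by simpa using by omega, by simpa, by simpa using by omega⟩

lemma seaweedPos_iff (k i j : ℕ) (hi1 : 1 ≤ i) (hi2 : i ≤ k + 1)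
    (hj1 : 1 ≤ j) (hj2 : j ≤ k + 1) :
    seaweedPos [k, 1] [k + 1] i j ↔ (i ≤ j ∨ i ≤ k) := by
  unfold seaweedPos
  rw [sameBlockA_iff, sameBlockB_iff]
  omega

def Gset (k : ℕ) : Finset (ℕ × ℕ) :=
  (Finset.Icc 0 k ×ˢ Finset.Icc 0 k).filter fun pq => pq.1 = 0 → pq.2 = 0

lemma mem_Gset (k : ℕ) (pq : ℕ × ℕ) :
    pq ∈ Gset k ↔ pq.1 ≤ k ∧ pq.2 ≤ k ∧ (pq.1 = 0 → pq.2 = 0) := by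
  unfold Gset
  simp [Finset.mem_filter, Finset.mem_product, Finset.mem_Icc]
  tauto

open scoped Classical in
lemma spectrumBlock_eq (k : ℕ) (hk : 1 ≤ k) :
    spectrumBlock [k, 1] [k + 1] (Finset.Icc 1 (k + 1)) (Finset.Icc 1 (k + 1)) =
      (Gset k).val.map fun pq => (pq.1 : ℤ) - pq.2 := by
  unfold spectrumBlock
  have hinj : Set.InjOn (fun pq : ℕ × ℕ => (sig k pq.1, sig k pq.2)) ↑(Gset k) := by
    rintro ⟨p, q⟩ hp ⟨p', q'⟩ hq h
    rw [Finset.mem_coe, mem_Gset] at hp hq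
    simp only [Prod.mk.injEq] at h
    have h1 : posN k (sig k p) = posN k (sig k p') := by rw [h.1]
    have h2 : posN k (sig k q) = posN k (sig k q') := by rw [h.2]
    rw [posN_sig k p hp.1, posN_sig k p' hq.1] at h1
    rw [posN_sig k q hp.2.1, posN_sig k q' hq.2.1] at h2
    simp [h1, h2]
  have himg : ((Finset.Icc 1 (k + 1) ×ˢ Finset.Icc 1 (k + 1)).filter
      fun p => seaweedPos [k, 1] [k + 1] p.1 p.2) =
      (Gset k).image fun pq => (sig k pq.1, sig k pq.2) := by
    ext ⟨i, j⟩
    simp only [Finset.mem_filter, Finset.mem_product, Finset.mem_Icc, Finset.mem_image]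
    constructor
    · rintro ⟨⟨⟨hi1, hi2⟩, hj1, hj2⟩, hsw⟩
      refine ⟨(posN k i, posN k j), ?_, ?_⟩
      · rw [mem_Gset]
        refine ⟨posN_le k i hi1 hi2, posN_le k j hj1 hj2, fun h0 => ?_⟩
        have hik : i = k + 1 := (posN_eq_zero k i hi1 hi2).1 h0
        have hjk : j = k + 1 := by
          rw [seaweedPos_iff k i j hi1 hi2 hj1 hj2] at hsw
          omega
        exact (posN_eq_zero k j hj1 hj2).2 hjk
      · simp [sig_posN k i hi1 hi2, sig_posN k j hj1 hj2]
    · rintro ⟨⟨p, q⟩, hpq, heq⟩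
      rw [mem_Gset] at hpq
      obtain ⟨hp, hq, h0⟩ := hpq
      cases heq
      have hb1 := sig_bounds k p hp
      have hb2 := sig_bounds k q hq
      refine ⟨⟨⟨hb1.1, hb1.2⟩, hb2.1, hb2.2⟩, ?_⟩
      rw [seaweedPos_iff k _ _ hb1.1 hb1.2 hb2.1 hb2.2]
      by_cases hp0 : p = 0
      · left
        have hq0 := h0 hp0
        subst hp0; subst hq0
        exact le_refl _
      · right
        exact sig_le_k k p hp hp0
  rw [himg, Finset.image_val_of_injOn hinj, Multiset.map_map]
  refine Multiset.map_congr rfl ?_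
  rintro ⟨p, q⟩ hpq
  rw [← Finset.mem_def, mem_Gset] at hpq
  obtain ⟨hp, hq, -⟩ := hpq
  have hb1 := sig_bounds k p hp
  have hb2 := sig_bounds k q hq
  simp only [Function.comp_apply]
  rw [pathWeight_eq k hb1.1 hb1.2 hb2.1 hb2.2]
  unfold phi
  rw [posN_sig k p hp, posN_sig k q hq]
  ring

lemma count_block (k : ℕ) (w : ℤ) :
    Multiset.count w ((Gset k).val.map fun pq => (pq.1 : ℤ) - pq.2) =
      if 0 ≤ w then k + 1 - w.toNat else k - (-w).toNat := by
  classical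
  rw [Multiset.count_map]
  have hcard : (Multiset.filter (fun a => w = (a.1 : ℤ) - a.2) (Gset k).val).card =
      ((Gset k).filter fun a => w = (a.1 : ℤ) - a.2).card := rfl
  rw [hcard]
  split_ifs with hw
  · set t := w.toNat with ht
    have hwt : w = (t : ℤ) := by omega
    by_cases htk : t ≤ k
    · have himg : ((Gset k).filter fun a => w = (a.1 : ℤ) - a.2) =
          (Finset.Icc 0 (k - t)).image fun q => (q + t, q) := by
        ext ⟨p, q⟩
        simp only [Finset.mem_filter, mem_Gset, Finset.mem_image, Finset.mem_Icc,
          Prod.mk.injEq]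
        constructor
        · rintro ⟨⟨hp, hq, h0⟩, hw2⟩
          exact ⟨q, ⟨Nat.zero_le _, by omega⟩, by omega, rfl⟩
        · rintro ⟨q', ⟨-, hq'⟩, h1, h2⟩
          subst h1; subst h2
          refine ⟨⟨by omega, by omega, by omega⟩, by omega⟩
      rw [himg, Finset.card_image_of_injective _
        (fun a b h => by simpa using congrArg Prod.snd h), Nat.card_Icc]
      omega
    · have hemp : ((Gset k).filter fun a => w = (a.1 : ℤ) - a.2) = ∅ := by
        rw [Finset.filter_eq_empty_iff]
        rintro ⟨p, q⟩ hpq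
        rw [mem_Gset] at hpq
        omega
      rw [hemp, Finset.card_empty]
      omega
  · set t := (-w).toNat with ht
    have hwt : w = -(t : ℤ) := by omega
    have ht1 : 1 ≤ t := by omega
    have himg : ((Gset k).filter fun a => w = (a.1 : ℤ) - a.2) =
        (Finset.Icc 1 (k - t)).image fun p => (p, p + t) := by
      ext ⟨p, q⟩
      simp only [Finset.mem_filter, mem_Gset, Finset.mem_image, Finset.mem_Icc,
        Prod.mk.injEq]
      constructor
      · rintro ⟨⟨hp, hq, h0⟩, hw2⟩
        exact ⟨p, ⟨by omega, by omega⟩, rfl, by omega⟩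
      · rintro ⟨p', ⟨hp1, hp2⟩, h1, h2⟩
        subst h1; subst h2
        refine ⟨⟨by omega, by omega, by omega⟩, by omega⟩
    rw [himg, Finset.card_image_of_injective _
      (fun a b h => by simpa using congrArg Prod.fst h), Nat.card_Icc]
    omega

lemma count_spectrum (k : ℕ) (hk : 1 ≤ k) (w : ℤ) :
    Multiset.count w (spectrum [k, 1] [k + 1]) =
      if 1 ≤ w then k + 1 - w.toNat else k - (-w).toNat := by
  unfold spectrum
  rw [show ([k, 1] : List ℕ).sum = k + 1 by simp]
  rw [Multiset.count_sub, spectrumBlock_eq k hk, count_block k w, Multiset.count_singleton]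
  split_ifs <;> omega

lemma toFinset_spectrum (k : ℕ) (hk : 1 ≤ k) :
    (spectrum [k, 1] [k + 1]).toFinset = Finset.Icc (1 - k : ℤ) k := by
  ext w
  rw [Multiset.mem_toFinset, ← Multiset.count_pos, count_spectrum k hk w, Finset.mem_Icc]
  split_ifs <;> omega

lemma sort_spectrum (k : ℕ) (hk : 1 ≤ k) :
    (spectrum [k, 1] [k + 1]).toFinset.sort (· ≤ ·) =
      (List.range (2 * k)).map fun i : ℕ => (1 - k + i : ℤ) := by
  rw [toFinset_spectrum k hk]
  have hnd : ((List.range (2 * k)).map fun i : ℕ => (1 - k + i : ℤ)).Nodup :=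
    List.nodup_range.map fun a b h => by omega
  refine (fun hp hs => List.Perm.eq_of_pairwise' (Finset.pairwise_sort _ _) hs hp) ?_ ?_
  · rw [List.perm_ext_iff_of_nodup (Finset.sort_nodup _ _) hnd]
    intro a
    rw [Finset.mem_sort, Finset.mem_Icc, List.mem_map]
    constructor
    · rintro ⟨h1, h2⟩
      exact ⟨(a - (1 - k)).toNat, by rw [List.mem_range]; omega, by omega⟩
    · rintro ⟨i, hi, rfl⟩
      rw [List.mem_range] at hi
      omega
  · rw [List.pairwise_map]
    exact List.pairwise_lt_range.imp fun h => by omega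

lemma getD_sort (k : ℕ) (hk : 1 ≤ k) (i : ℕ) (hi : i < 2 * k) :
    ((spectrum [k, 1] [k + 1]).toFinset.sort (· ≤ ·)).getD i 0 = 1 - (k : ℤ) + i := by
  rw [sort_spectrum k hk]
  rw [List.getD_eq_getElem _ _ (by simpa using hi)]
  simp

lemma count_at (k i : ℕ) (hk : 1 ≤ k) (hi : i < 2 * k) :
    Multiset.count ((1 : ℤ) - k + i) (spectrum [k, 1] [k + 1]) = min (i + 1) (2 * k - i) := by
  rw [count_spectrum k hk]
  split_ifs <;> omega


/-- For `k ≥ 1`, the Frobenius type-A seaweed `p^A(k|1 / k+1)` has the log-concave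
spectrum property. -/
theorem statement8 (k : ℕ) (hk : 1 ≤ k) :
    HasLogConcaveSpectrum (spectrum [k, 1] [k + 1]) := by
  intro i hi hlen
  have hlen2 : ((spectrum [k, 1] [k + 1]).toFinset.sort (· ≤ ·)).length = 2 * k := by
    rw [sort_spectrum k hk]; simp
  rw [hlen2] at hlen
  rw [getD_sort k hk (i - 1) (by omega), getD_sort k hk i (by omega),
    getD_sort k hk (i + 1) (by omega)]
  show Multiset.count _ _ * Multiset.count _ _ ≤ Multiset.count _ _ ^ 2
  rw [count_at k (i - 1) hk (by omega), count_at k i hk (by omega),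
    count_at k (i + 1) hk (by omega), pow_two]
  rcases Nat.lt_or_ge i k with h | h
  · have e2 : min (i + 1) (2 * k - i) = i + 1 := by omega
    have e1 : min (i - 1 + 1) (2 * k - (i - 1)) ≤ i := by omega
    have e3 : min (i + 1 + 1) (2 * k - (i + 1)) ≤ i + 2 := by omega
    rw [e2]
    calc min (i - 1 + 1) (2 * k - (i - 1)) * min (i + 1 + 1) (2 * k - (i + 1))
        ≤ i * (i + 2) := Nat.mul_le_mul e1 e3
      _ ≤ (i + 1) * (i + 1) := by nlinarith
  · obtain ⟨j, hj⟩ : ∃ j, 2 * k = i + 1 + j := ⟨2 * k - (i + 1), by omega⟩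
    have e2 : min (i + 1) (2 * k - i) = j + 1 := by omega
    have e1 : min (i - 1 + 1) (2 * k - (i - 1)) ≤ j + 2 := by omega
    have e3 : min (i + 1 + 1) (2 * k - (i + 1)) ≤ j := by omega
    rw [e2]
    calc min (i - 1 + 1) (2 * k - (i - 1)) * min (i + 1 + 1) (2 * k - (i + 1))
        ≤ (j + 2) * j := Nat.mul_le_mul e1 e3
      _ ≤ (j + 1) * (j + 1) := by nlinarith

end Seaweed
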